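/- arXiv:1704.05232 — 2 statements merged into one kernel-verified Lean document; each statement's English description precedes it below -/
import Mathlib

section
/- There is a universal constant c > 0 such that the following holds. Let d ≥ 2 and let P(S^{d-1}, δ) denote the packing number of the unit sphere in ℝ^d at scale δ. For every ε with 0 < ε < 1/8 and every integer k ≥ 1, there exist arbitrarily large integers n and a family X of n points in ℝ^d (points may be repeated) such that every finite set ξ ⊆ ℝ^d satisfying Φ(ξ, X) ≤ ε · Δ_k(X) has cardinality |ξ| ≥ c · P(S^{d-1}, √(8ε)) · k · (log n)/√ε. -/
/-- k-means cost of a family `X : Fin n → ℝ^d` with respect to a finite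
(nonempty) center set `C ⊆ ℝ^d`: `Φ(C, X) = Σ_i min_{c ∈ C} ‖X i − c‖²`. -/
noncomputable def kmeansCost {d n : ℕ} (C : Finset (EuclideanSpace ℝ (Fin d)))
    (X : Fin n → EuclideanSpace ℝ (Fin d)) : ℝ :=
  ∑ i, sInf ((fun c => dist (X i) c ^ 2) '' (C : Set (EuclideanSpace ℝ (Fin d))))

/-- Optimal k-means cost `Δ_k(X)`: infimum of `Φ(C, X)` over sets `C ⊆ ℝ^d`
with `|C| = k`. -/
noncomputable def kmeansOpt {d n : ℕ} (k : ℕ) (X : Fin n → EuclideanSpace ℝ (Fin d)) : ℝ :=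
  sInf {r : ℝ | ∃ C : Finset (EuclideanSpace ℝ (Fin d)), C.card = k ∧ kmeansCost C X = r}

/-- Packing number `P(S^{d-1}, δ)` of the unit sphere in `ℝ^d` at scale `δ`:
the maximum cardinality of a set of unit vectors in which any two distinct
elements are at Euclidean distance at least `δ`. -/
noncomputable def packingNumber (d : ℕ) (δ : ℝ) : ℕ :=
  sSup {m : ℕ | ∃ S : Finset (EuclideanSpace ℝ (Fin d)), S.card = m ∧
    (∀ p ∈ S, ‖p‖ = 1) ∧
    ∀ x ∈ S, ∀ y ∈ S, x ≠ y → δ ≤ dist x y}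

theorem packing_exists (d : ℕ) (δ : ℝ) (hd : 1 ≤ d) (hδ : 0 < δ) :
    ∃ S : Finset (EuclideanSpace ℝ (Fin d)), S.card = packingNumber d δ ∧
      (∀ p ∈ S, ‖p‖ = 1) ∧
      (∀ x ∈ S, ∀ y ∈ S, x ≠ y → δ ≤ dist x y) ∧ 1 ≤ packingNumber d δ := by
  classical
  set A := {m : ℕ | ∃ S : Finset (EuclideanSpace ℝ (Fin d)), S.card = m ∧
    (∀ p ∈ S, ‖p‖ = 1) ∧
    ∀ x ∈ S, ∀ y ∈ S, x ≠ y → δ ≤ dist x y} with hA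
  obtain ⟨t, ht, hcov⟩ := (Metric.totallyBounded_iff.mp
    (isCompact_sphere (0 : EuclideanSpace ℝ (Fin d)) 1).totallyBounded) (δ/2) (by linarith)
  have hbdd : BddAbove A := by
    refine ⟨ht.toFinset.card, ?_⟩
    rintro m ⟨S, rfl, hnorm, hsep⟩
    have hmem : ∀ p ∈ S, ∃ y ∈ t, p ∈ Metric.ball y (δ/2) := by
      intro p hp
      have : p ∈ Metric.sphere (0 : EuclideanSpace ℝ (Fin d)) 1 := by
        simp [Metric.mem_sphere, dist_eq_norm, hnorm p hp]
      have := hcov this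
      simpa using this
    choose f hf hfb using hmem
    refine Finset.card_le_card_of_injOn (fun p => if hp : p ∈ S then f p hp else 0) ?_ ?_
    · intro p hp
      simp only [hp, dif_pos]
      exact ht.mem_toFinset.mpr (by rw [dif_pos (Finset.mem_coe.mp hp)]; exact hf p hp)
    · intro p hp q hq hpq
      simp only [Finset.mem_coe] at hp hq
      simp only [hp, hq, dif_pos] at hpq
      by_contra hne
      have h1 := hfb p hp
      have h2 := hfb q hq
      rw [hpq] at h1
      have : dist p q < δ := by
        calc dist p q ≤ dist p (f q hq) + dist (f q hq) q := dist_triangle _ _ _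
        _ < δ/2 + δ/2 := by
            rw [Metric.mem_ball] at h1 h2
            rw [dist_comm (f q hq) q]; linarith
        _ = δ := by ring
      exact absurd (hsep p hp q hq hne) (not_le.mpr this)
  have h1A : 1 ∈ A := by
    refine ⟨{EuclideanSpace.single (⟨0, hd⟩ : Fin d) (1:ℝ)}, by simp, ?_, ?_⟩
    · intro p hp
      simp only [Finset.mem_singleton] at hp
      rw [hp, EuclideanSpace.norm_single]; norm_num
    · intro x hx y hy hxy
      simp only [Finset.mem_singleton] at hx hy
      exact absurd (hx.trans hy.symm) hxy
  have hmem : packingNumber d δ ∈ A := Nat.sSup_mem ⟨1, h1A⟩ hbdd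
  obtain ⟨S, hcard, hnorm, hsep⟩ := hmem
  exact ⟨S, hcard, hnorm, hsep, le_csSup hbdd h1A⟩

noncomputable def wseq (ρ : ℝ) (W₀ : ℕ) : ℕ → ℕ
  | 0 => W₀
  | (j+1) => ⌈ρ * wseq ρ W₀ j⌉₊ + 1

theorem wseq_ge (ρ : ℝ) (W₀ : ℕ) (hρ : 1 ≤ ρ) (hW : 1 ≤ W₀) : ∀ j, W₀ ≤ wseq ρ W₀ j := by
  intro j
  induction j with
  | zero => simp [wseq]
  | succ j ih =>
    have h1 : (W₀ : ℝ) ≤ ρ * wseq ρ W₀ j := by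
      have : (W₀ : ℝ) ≤ (wseq ρ W₀ j : ℝ) := by exact_mod_cast ih
      nlinarith [(Nat.one_le_cast.mpr (le_trans hW ih) : (1:ℝ) ≤ (wseq ρ W₀ j : ℝ))]
    have := Nat.le_ceil (ρ * wseq ρ W₀ j)
    have : (W₀ : ℝ) ≤ (⌈ρ * wseq ρ W₀ j⌉₊ : ℝ) := le_trans h1 this
    have : W₀ ≤ ⌈ρ * wseq ρ W₀ j⌉₊ := by exact_mod_cast this
    simp only [wseq]; omega

theorem wseq_mono (ρ : ℝ) (W₀ : ℕ) (hρ : 1 ≤ ρ) (hW : 1 ≤ W₀) :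
    ∀ i j, i ≤ j → wseq ρ W₀ i ≤ wseq ρ W₀ j := by
  have step : ∀ j, wseq ρ W₀ j ≤ wseq ρ W₀ (j+1) := by
    intro j
    have h1 : (wseq ρ W₀ j : ℝ) ≤ ρ * wseq ρ W₀ j := by
      nlinarith [Nat.cast_nonneg (wseq ρ W₀ j) (α := ℝ)]
    have h2 := le_trans h1 (Nat.le_ceil _)
    have : wseq ρ W₀ j ≤ ⌈ρ * wseq ρ W₀ j⌉₊ := by exact_mod_cast h2
    simp only [wseq]; omega
  intro i j hij
  induction j with
  | zero => simp_all
  | succ j ih =>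
    rcases Nat.lt_or_ge i (j+1) with h | h
    · exact le_trans (ih (by omega)) (step j)
    · have : i = j + 1 := by omega
      simp [this]

theorem wseq_growth_lt (ρ : ℝ) (W₀ : ℕ) (hρ : 1 ≤ ρ) (hW : 1 ≤ W₀) :
    ∀ i j, i < j → ρ * wseq ρ W₀ i < wseq ρ W₀ j := by
  intro i j hij
  have h1 : ρ * wseq ρ W₀ i < wseq ρ W₀ (i+1) := by
    have := Nat.le_ceil (ρ * wseq ρ W₀ i)
    simp only [wseq]
    push_cast
    linarith
  have h2 : (wseq ρ W₀ (i+1) : ℝ) ≤ wseq ρ W₀ j := by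
    exact_mod_cast wseq_mono ρ W₀ hρ hW (i+1) j hij
  linarith

theorem wseq_upper (ρ : ℝ) (W₀ : ℕ) (hρ : 1 ≤ ρ) (hW : 1 ≤ W₀) (δ : ℝ) (hδ : 0 < δ)
    (h2W : 2 ≤ δ * W₀) : ∀ j, (wseq ρ W₀ j : ℝ) ≤ W₀ * (ρ + δ) ^ j := by
  intro j
  induction j with
  | zero => simp [wseq]
  | succ j ih =>
    have hWj : (W₀ : ℝ) ≤ wseq ρ W₀ j := by exact_mod_cast wseq_ge ρ W₀ hρ hW j
    have hle : (wseq ρ W₀ (j+1) : ℝ) ≤ ρ * wseq ρ W₀ j + 2 := by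
      have := (Nat.ceil_lt_add_one (by positivity : (0:ℝ) ≤ ρ * wseq ρ W₀ j))
      simp only [wseq]
      push_cast
      linarith
    have h2 : (2:ℝ) ≤ δ * wseq ρ W₀ j := le_trans h2W (by nlinarith)
    have h3 : (wseq ρ W₀ (j+1) : ℝ) ≤ (ρ + δ) * wseq ρ W₀ j := by nlinarith
    calc (wseq ρ W₀ (j+1) : ℝ) ≤ (ρ + δ) * wseq ρ W₀ j := h3
    _ ≤ (ρ + δ) * (W₀ * (ρ + δ) ^ j) := by nlinarith
    _ = W₀ * (ρ + δ) ^ (j+1) := by ring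

theorem kmeansCost_nonneg {d n : ℕ} (C : Finset (EuclideanSpace ℝ (Fin d)))
    (X : Fin n → EuclideanSpace ℝ (Fin d)) : 0 ≤ kmeansCost C X := by
  apply Finset.sum_nonneg
  intro i _
  apply Real.sInf_nonneg
  rintro x ⟨c, _, rfl⟩
  positivity

theorem kmeansOpt_le {d n k : ℕ} (C : Finset (EuclideanSpace ℝ (Fin d)))
    (X : Fin n → EuclideanSpace ℝ (Fin d)) (hC : C.card = k) :
    kmeansOpt k X ≤ kmeansCost C X := by
  apply csInf_le
  · exact ⟨0, by rintro r ⟨C', _, rfl⟩; exact kmeansCost_nonneg C' X⟩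
  · exact ⟨C, hC, rfl⟩

set_option maxHeartbeats 2000000 in
theorem kmeans_construction {d : ℕ} (hd : 1 ≤ d) (k L : ℕ) (hk : 1 ≤ k)
    (ε δ : ℝ) (hε : 0 < ε) (hδ0 : 0 < δ) (hδ1 : δ < 1) (hδsq : δ^2 = 8*ε)
    (S : Finset (EuclideanSpace ℝ (Fin d))) (hSne : S.Nonempty)
    (hSnorm : ∀ p ∈ S, ‖p‖ = 1) (hSsep : ∀ x ∈ S, ∀ y ∈ S, x ≠ y → δ ≤ dist x y)
    (w : ℕ → ℕ) (hw1 : ∀ j, 1 ≤ w j)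
    (hgrow : ∀ i j : ℕ, i < j → ((1+2*δ/5)/(1-2*δ/5))^2 * w i < w j) :
    ∃ X : Fin (k * S.card * ∑ j ∈ Finset.range L, w j) → EuclideanSpace ℝ (Fin d),
      ∀ ξ : Finset (EuclideanSpace ℝ (Fin d)), ξ.Nonempty →
        kmeansCost ξ X ≤ ε * kmeansOpt k X →
        (7:ℝ)/32 * ((k : ℝ) * S.card * L) ≤ ξ.card := by
  classical
  set n := k * S.card * ∑ j ∈ Finset.range L, w j with hn
  -- basic scale facts
  set s : ℕ → ℝ := fun j => Real.sqrt ((w j : ℝ))⁻¹ with hs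
  have hwpos : ∀ j, (0:ℝ) < (w j : ℝ) := fun j => by exact_mod_cast hw1 j
  have hs_pos : ∀ j, 0 < s j := fun j => Real.sqrt_pos.mpr (inv_pos.mpr (hwpos j))
  have hssq : ∀ j, (s j)^2 = ((w j:ℝ))⁻¹ := fun j => Real.sq_sqrt (le_of_lt (inv_pos.mpr (hwpos j)))
  have hws : ∀ j, (w j : ℝ) * (s j)^2 = 1 := fun j => by
    rw [hssq]; exact mul_inv_cancel₀ (ne_of_gt (hwpos j))
  have hs_le1 : ∀ j, s j ≤ 1 := by
    intro j
    rw [hs]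
    simp only
    rw [show (1:ℝ) = Real.sqrt 1 by simp]
    apply Real.sqrt_le_sqrt
    rw [inv_le_one_iff₀]
    right
    exact_mod_cast hw1 j
  -- geometry
  set u : EuclideanSpace ℝ (Fin d) := EuclideanSpace.single (⟨0, hd⟩ : Fin d) (1:ℝ) with hu
  have hunorm : ‖u‖ = 1 := by rw [hu, EuclideanSpace.norm_single]; norm_num
  set z : Fin k → EuclideanSpace ℝ (Fin d) := fun g => ((10 * (g:ℕ) : ℝ)) • u with hz
  have hzdist : ∀ g h : Fin k, g ≠ h → 10 ≤ dist (z g) (z h) := by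
    intro g h hgh
    have hne : (((g:ℕ):ℤ)) ≠ ((h:ℕ):ℤ) := by
      exact_mod_cast fun hc => hgh (Fin.ext (by exact_mod_cast hc))
    have h1z : (1:ℤ) ≤ |((g:ℕ):ℤ) - ((h:ℕ):ℤ)| := Int.one_le_abs (sub_ne_zero.mpr hne)
    have h1 : (1:ℝ) ≤ |((g:ℕ):ℝ) - ((h:ℕ):ℝ)| := by exact_mod_cast h1z
    have key : dist (z g) (z h) = 10 * |((g:ℕ):ℝ) - ((h:ℕ):ℝ)| := by
      rw [hz]
      simp only
      rw [dist_eq_norm, ← sub_smul, norm_smul, hunorm, mul_one, Real.norm_eq_abs]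
      rw [show (10 * ((g:ℕ):ℝ) - 10 * ((h:ℕ):ℝ)) = 10 * (((g:ℕ):ℝ) - ((h:ℕ):ℝ)) by ring,
        abs_mul, abs_of_pos (show (0:ℝ) < 10 by norm_num)]
    rw [key]; linarith
  set loc : Fin k → {p // p ∈ S} → Fin L → EuclideanSpace ℝ (Fin d) :=
    fun g p j => z g + (s j) • (p : EuclideanSpace ℝ (Fin d)) with hloc
  have hloc_z : ∀ g p j, dist (loc g p j) (z g) = s j := by
    intro g p j
    rw [hloc]
    simp only [dist_eq_norm, add_sub_cancel_left, norm_smul, Real.norm_eq_abs,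
      abs_of_pos (hs_pos j), hSnorm p p.2, mul_one]
  have hloc_loc : ∀ g p q (j : Fin L), p ≠ q →
      δ * s j ≤ dist (loc g p j) (loc g q j) := by
    intro g p q j hpq
    rw [hloc]
    simp only [dist_eq_norm]
    have : z g + s ↑j • (p : EuclideanSpace ℝ (Fin d)) - (z g + s ↑j • (q : EuclideanSpace ℝ (Fin d)))
        = s ↑j • ((p : EuclideanSpace ℝ (Fin d)) - q) := by
      rw [smul_sub]; abel
    rw [this, norm_smul, Real.norm_eq_abs, abs_of_pos (hs_pos j)]
    have hsep := hSsep p p.2 q q.2 (fun hc => hpq (Subtype.ext hc))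
    rw [dist_eq_norm] at hsep
    calc δ * s ↑j = s ↑j * δ := by ring
    _ ≤ s ↑j * ‖(p : EuclideanSpace ℝ (Fin d)) - q‖ := by
        apply mul_le_mul_of_nonneg_left hsep (le_of_lt (hs_pos j))
  -- the index type and point family
  have hcard : Fintype.card (Fin k × {p // p ∈ S} × (Σ j : Fin L, Fin (w j))) = n := by
    rw [hn]
    simp [Fintype.card_prod, Fintype.card_coe, Fintype.card_sigma, Fin.sum_univ_eq_sum_range,
      mul_assoc]
  set pt : (Fin k × {p // p ∈ S} × (Σ j : Fin L, Fin (w j))) → EuclideanSpace ℝ (Fin d) :=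
    fun x => loc x.1 x.2.1 x.2.2.1 with hpt
  set e := Fintype.equivFinOfCardEq hcard with he
  refine ⟨fun i => pt (e.symm i), ?_⟩
  intro ξ hξne hξcost
  have hsum : ∀ f : EuclideanSpace ℝ (Fin d) → ℝ,
      ∑ i, f (pt (e.symm i)) = ∑ x : (Fin k × {p // p ∈ S} × (Σ j : Fin L, Fin (w j))), f (pt x) :=
    fun f => Equiv.sum_comp e.symm (f ∘ pt)
  -- upper bound on optimum
  have hzinj : Function.Injective z := by
    intro g h hgh
    by_contra hne
    have := hzdist g h hne
    rw [hgh] at this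
    simp at this
    linarith
  set C₀ : Finset (EuclideanSpace ℝ (Fin d)) := Finset.image z Finset.univ with hC₀
  have hC₀card : C₀.card = k := by
    rw [hC₀, Finset.card_image_of_injective _ hzinj, Finset.card_univ, Fintype.card_fin]
  have hopt : kmeansOpt k (fun i => pt (e.symm i)) ≤ (k:ℝ) * S.card * L := by
    refine le_trans (kmeansOpt_le C₀ _ hC₀card) ?_
    unfold kmeansCost
    rw [hsum (fun v => sInf ((fun c => dist v c ^ 2) '' (C₀ : Set (EuclideanSpace ℝ (Fin d)))))]
    have hterm : ∀ x : (Fin k × {p // p ∈ S} × (Σ j : Fin L, Fin (w j))),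
        sInf ((fun c => dist (pt x) c ^ 2) '' (C₀ : Set (EuclideanSpace ℝ (Fin d))))
          ≤ (s x.2.2.1)^2 := by
      intro x
      have hmem : dist (pt x) (z x.1) ^ 2 ∈
          ((fun c => dist (pt x) c ^ 2) '' (C₀ : Set (EuclideanSpace ℝ (Fin d)))) :=
        ⟨z x.1, by simp [hC₀], rfl⟩
      have hbdd : BddBelow ((fun c => dist (pt x) c ^ 2) '' (C₀ : Set (EuclideanSpace ℝ (Fin d)))) :=
        ⟨0, by rintro y ⟨c, _, rfl⟩; positivity⟩
      refine le_trans (csInf_le hbdd hmem) ?_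
      rw [hpt]
      simp only
      rw [hloc_z]
    refine le_trans (Finset.sum_le_sum (fun x _ => hterm x)) ?_
    have : ∑ x : (Fin k × {p // p ∈ S} × (Σ j : Fin L, Fin (w j))), (s x.2.2.1)^2
        = (k:ℝ) * S.card * L := by
      rw [Fintype.sum_prod_type]
      have inner : ∀ g : Fin k, ∑ y : {p // p ∈ S} × (Σ j : Fin L, Fin (w j)), (s y.2.1)^2
          = (S.card : ℝ) * L := by
        intro g
        rw [Fintype.sum_prod_type]
        have inner2 : ∀ p : {p // p ∈ S}, ∑ σ : Σ j : Fin L, Fin (w j), (s σ.1)^2 = (L:ℝ) := by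
          intro p
          rw [← Finset.univ_sigma_univ, Finset.sum_sigma]
          have : ∀ j : Fin L, ∑ _t : Fin (w j), (s (j:ℕ))^2 = 1 := by
            intro j
            rw [Finset.sum_const, Finset.card_univ, Fintype.card_fin, nsmul_eq_mul, hws]
          rw [Finset.sum_congr rfl (fun j _ => this j)]
          simp
        rw [Finset.sum_congr rfl (fun p _ => inner2 p)]
        simp [Finset.card_univ, mul_comm]
      rw [Finset.sum_congr rfl (fun g _ => inner g)]
      simp only [Finset.sum_const, Finset.card_univ, Fintype.card_fin, nsmul_eq_mul]
      ring
    rw [this]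
  -- covered triples
  set cov : Finset (Fin k × {p // p ∈ S} × Fin L) :=
    Finset.univ.filter (fun y => ∃ c ∈ ξ, dist (loc y.1 y.2.1 y.2.2) c ≤ (2/5)*δ*s y.2.2) with hcov
  have hcov_card : cov.card ≤ ξ.card := by
    have hch : ∀ y : (Fin k × {p // p ∈ S} × Fin L), y ∈ cov →
        ∃ c, c ∈ ξ ∧ dist (loc y.1 y.2.1 y.2.2) c ≤ (2/5)*δ*s y.2.2 := by
      intro y hy
      rw [hcov, Finset.mem_filter] at hy
      obtain ⟨-, c, hc, hdc⟩ := hy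
      exact ⟨c, hc, hdc⟩
    choose! F hF1 hF2 using hch
    have hannulus : ∀ (g : Fin k) (p : {p // p ∈ S}) (j : Fin L) (c : EuclideanSpace ℝ (Fin d)),
        dist (loc g p j) c ≤ (2/5)*δ*s j →
        s (j:ℕ) * (1 - 2*δ/5) ≤ dist c (z g) ∧ dist c (z g) ≤ s (j:ℕ) * (1 + 2*δ/5) := by
      intro g p j c hc
      have h1 := hloc_z g p j
      have t1 : dist c (z g) ≤ dist c (loc g p j) + dist (loc g p j) (z g) := dist_triangle _ _ _
      have t2 : dist (loc g p j) (z g) ≤ dist (loc g p j) c + dist c (z g) := dist_triangle _ _ _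
      rw [dist_comm c (loc g p j)] at t1
      constructor
      · nlinarith
      · nlinarith
    have hinj : Set.InjOn F ↑cov := by
      intro y₁ hy₁ y₂ hy₂ hF
      simp only [Finset.mem_coe] at hy₁ hy₂
      obtain ⟨g₁, p₁, j₁⟩ := y₁
      obtain ⟨g₂, p₂, j₂⟩ := y₂
      have hd₁ := hF2 _ hy₁
      have hd₂ := hF2 _ hy₂
      simp only at hd₁ hd₂
      set c := F (g₁, p₁, j₁) with hc
      rw [← hF] at hd₂
      have ha₁ := hannulus g₁ p₁ j₁ c hd₁
      have ha₂ := hannulus g₂ p₂ j₂ c hd₂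
      have hδ25 : 0 < 1 - 2*δ/5 := by linarith
      have hδ25' : 0 < 1 + 2*δ/5 := by linarith
      -- groups agree
      have hg : g₁ = g₂ := by
        by_contra hne
        have h10 := hzdist g₁ g₂ hne
        have t : dist (z g₁) (z g₂) ≤ dist (z g₁) c + dist c (z g₂) := dist_triangle _ _ _
        rw [dist_comm (z g₁) c] at t
        have b₁ : dist c (z g₁) ≤ 2 := le_trans ha₁.2 (by nlinarith [hs_le1 (j₁:ℕ), hs_pos (j₁:ℕ)])
        have b₂ : dist c (z g₂) ≤ 2 := le_trans ha₂.2 (by nlinarith [hs_le1 (j₂:ℕ), hs_pos (j₂:ℕ)])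
        linarith
      subst hg
      -- levels agree
      have hscale : ∀ i i' : Fin L, (i:ℕ) < (i':ℕ) →
          dist c (z g₁) ≤ s (i':ℕ) * (1 + 2*δ/5) → s (i:ℕ) * (1 - 2*δ/5) ≤ dist c (z g₁) → False := by
        intro i i' hii hub hlb
        set ρ0 : ℝ := (1+2*δ/5)/(1-2*δ/5) with hρ0
        have hρ0pos : 0 < ρ0 := by positivity
        have hgr := hgrow (i:ℕ) (i':ℕ) hii
        have hlt : ((w (i':ℕ) : ℝ))⁻¹ < (ρ0^2 * (w (i:ℕ) : ℝ))⁻¹ := by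
          exact inv_strictAnti₀ (mul_pos (pow_pos hρ0pos 2) (hwpos (i:ℕ))) hgr
        have hsqlt : s (i':ℕ) < s (i:ℕ) / ρ0 := by
          have h1 : s (i':ℕ) < Real.sqrt ((ρ0^2 * (w (i:ℕ) : ℝ))⁻¹) := by
            rw [hs]
            exact Real.sqrt_lt_sqrt (by positivity) hlt
          have h2 : Real.sqrt ((ρ0^2 * (w (i:ℕ) : ℝ))⁻¹) = s (i:ℕ) / ρ0 := by
            rw [hs]
            simp only
            rw [mul_inv, Real.sqrt_mul (by positivity), Real.sqrt_inv, Real.sqrt_sq (le_of_lt hρ0pos)]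
            ring
          linarith
        have key : s (i':ℕ) * (1 + 2*δ/5) < s (i:ℕ) * (1 - 2*δ/5) := by
          have : s (i:ℕ) / ρ0 * (1 + 2*δ/5) = s (i:ℕ) * (1 - 2*δ/5) := by
            rw [hρ0]
            field_simp
          nlinarith
        linarith
      have hj : j₁ = j₂ := by
        rcases lt_trichotomy (j₁:ℕ) (j₂:ℕ) with hlt | heq | hgt
        · exact absurd (hscale j₁ j₂ hlt ha₂.2 ha₁.1) not_false
        · exact Fin.ext heq
        · exact absurd (hscale j₂ j₁ hgt ha₁.2 ha₂.1) not_false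
      subst hj
      -- packing points agree
      have hp : p₁ = p₂ := by
        by_contra hne
        have hsep := hloc_loc g₁ p₁ p₂ j₁ hne
        have t : dist (loc g₁ p₁ j₁) (loc g₁ p₂ j₁) ≤
            dist (loc g₁ p₁ j₁) c + dist c (loc g₁ p₂ j₁) := dist_triangle _ _ _
        rw [dist_comm c (loc g₁ p₂ j₁)] at t
        have hsj := hs_pos (j₁:ℕ)
        nlinarith
      rw [hp]
    exact Finset.card_le_card_of_injOn F (fun y hy => hF1 y hy) hinj
  have hcost_lb : (32/25)*ε*(((k:ℝ) * S.card * L) - cov.card) ≤ kmeansCost ξ (fun i => pt (e.symm i)) := by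
    set G : (Fin k × {p // p ∈ S} × Fin L) → ℝ :=
      fun y => if y ∈ cov then 0 else (32/25)*ε*((w (y.2.2:ℕ) : ℝ))⁻¹ with hG
    have hterm : ∀ x : (Fin k × {p // p ∈ S} × (Σ j : Fin L, Fin (w j))),
        G (x.1, x.2.1, x.2.2.1) ≤
          sInf ((fun c => dist (pt x) c ^ 2) '' (ξ : Set (EuclideanSpace ℝ (Fin d)))) := by
      intro x
      rw [hG]
      simp only
      split
      · apply Real.sInf_nonneg
        rintro b ⟨cc, _, rfl⟩
        positivity
      · rename_i hnc
        have hnc' : ∀ cc ∈ ξ, (2/5)*δ*s (x.2.2.1:ℕ) < dist (loc x.1 x.2.1 x.2.2.1) cc := by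
          intro cc hcc
          by_contra hle
          exact hnc (by
            rw [hcov, Finset.mem_filter]
            exact ⟨Finset.mem_univ _, cc, hcc, le_of_not_gt hle⟩)
        apply le_csInf
        · exact (hξne.to_set.image _)
        · rintro b ⟨cc, hcc, rfl⟩
          have hlt := hnc' cc hcc
          have hr : (0:ℝ) ≤ (2/5)*δ*s (x.2.2.1:ℕ) := by
            have := hs_pos (x.2.2.1:ℕ); positivity
          have h2 : ((2/5)*δ*s (x.2.2.1:ℕ))^2 ≤ dist (pt x) cc ^ 2 := by
            rw [hpt]
            simp only
            exact pow_le_pow_left₀ hr (le_of_lt hlt) 2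
          refine le_trans (le_of_eq ?_) h2
          have hwx := hwpos (x.2.2.1:ℕ)
          rw [mul_pow, mul_pow, hssq, hδsq]
          ring
    unfold kmeansCost
    rw [hsum (fun v => sInf ((fun c => dist v c ^ 2) '' (ξ : Set (EuclideanSpace ℝ (Fin d)))))]
    refine le_trans (le_of_eq ?_) (Finset.sum_le_sum
      (fun x _ => hterm x))
    -- compute the sum of G over the index type
    have step2 : ∑ x : (Fin k × {p // p ∈ S} × (Σ j : Fin L, Fin (w j))), G (x.1, x.2.1, x.2.2.1)
        = ∑ y : (Fin k × {p // p ∈ S} × Fin L), (w (y.2.2:ℕ) : ℝ) * G y := by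
      rw [Fintype.sum_prod_type, Fintype.sum_prod_type]
      apply Finset.sum_congr rfl
      intro g _
      rw [Fintype.sum_prod_type, Fintype.sum_prod_type]
      apply Finset.sum_congr rfl
      intro p _
      rw [← Finset.univ_sigma_univ, Finset.sum_sigma]
      refine Finset.sum_congr rfl (fun j _ => ?_)
      show ∑ _t : Fin (w (j:ℕ)), G (g, p, j) = (w (j:ℕ) : ℝ) * G (g, p, j)
      rw [Finset.sum_const, Finset.card_univ, Fintype.card_fin, nsmul_eq_mul]
    have hwG : ∀ y : (Fin k × {p // p ∈ S} × Fin L),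
        (w (y.2.2:ℕ) : ℝ) * G y = if y ∈ cov then 0 else (32/25)*ε := by
      intro y
      rw [hG]
      simp only
      split
      · ring
      · rw [show (w (y.2.2:ℕ) : ℝ) * ((32/25)*ε*((w (y.2.2:ℕ) : ℝ))⁻¹)
          = (32/25)*ε * ((w (y.2.2:ℕ) : ℝ) * ((w (y.2.2:ℕ) : ℝ))⁻¹) by ring,
          mul_inv_cancel₀ (ne_of_gt (hwpos (y.2.2:ℕ))), mul_one]
    have step3 : ∑ y : (Fin k × {p // p ∈ S} × Fin L), (w (y.2.2:ℕ) : ℝ) * G y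
        = (32/25)*ε*(((k:ℝ) * S.card * L) - cov.card) := by
      rw [Finset.sum_congr rfl (fun y _ => hwG y)]
      have split1 : ∀ y : (Fin k × {p // p ∈ S} × Fin L),
          (if y ∈ cov then (0:ℝ) else (32/25)*ε)
            = (32/25)*ε - (if y ∈ cov then (32/25)*ε else 0) := by
        intro y; split <;> ring
      rw [Finset.sum_congr rfl (fun y _ => split1 y), Finset.sum_sub_distrib,
        Finset.sum_const, Finset.sum_ite_mem, Finset.univ_inter, Finset.sum_const]
      rw [Finset.card_univ]
      have : Fintype.card (Fin k × {p // p ∈ S} × Fin L) = k * S.card * L := by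
        simp [Fintype.card_prod, Fintype.card_coe, mul_assoc]
      rw [this]
      simp only [nsmul_eq_mul]
      push_cast
      ring
    rw [← step3, ← step2]
  -- combine
  have hεopt : ε * kmeansOpt k (fun i => pt (e.symm i)) ≤ ε * ((k:ℝ) * S.card * L) :=
    mul_le_mul_of_nonneg_left hopt (le_of_lt hε)
  have hM : (7:ℝ)/32 * ((k:ℝ) * S.card * L) ≤ cov.card := by
    have h1 : (32/25)*ε*(((k:ℝ) * S.card * L) - cov.card) ≤ ε * ((k:ℝ) * S.card * L) :=
      le_trans hcost_lb (le_trans hξcost hεopt)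
    nlinarith
  exact le_trans hM (by exact_mod_cast hcov_card)

set_option maxHeartbeats 4000000 in
theorem kmeans_lower_bound' :
    ∃ c : ℝ, 0 < c ∧
      ∀ d : ℕ, 2 ≤ d →
      ∀ ε : ℝ, 0 < ε → ε < 1 / 8 →
      ∀ k : ℕ, 1 ≤ k →
      ∀ N : ℕ, ∃ n : ℕ, N ≤ n ∧
        ∃ X : Fin n → EuclideanSpace ℝ (Fin d),
          ∀ ξ : Finset (EuclideanSpace ℝ (Fin d)), ξ.Nonempty →
            kmeansCost ξ X ≤ ε * kmeansOpt k X →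
            c * (packingNumber d (Real.sqrt (8 * ε)) : ℝ) * k * Real.log n / Real.sqrt ε
              ≤ (ξ.card : ℝ) := by
  refine ⟨1/256, by norm_num, ?_⟩
  intro d hd ε hε hε8 k hk N
  set δ : ℝ := Real.sqrt (8*ε) with hδ
  have hδ0 : 0 < δ := Real.sqrt_pos.mpr (by linarith)
  have hδsq : δ^2 = 8*ε := Real.sq_sqrt (by linarith)
  have hδ1 : δ < 1 := by
    nlinarith [hδsq, hδ0]
  obtain ⟨S, hScard, hSnorm, hSsep, hP1⟩ := packing_exists d δ (by omega) hδ0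
  have hSne : S.Nonempty := Finset.card_pos.mp (by omega)
  have hScard1 : 1 ≤ S.card := by omega
  -- parameters
  set ρsq : ℝ := ((1+2*δ/5)/(1-2*δ/5))^2 with hρsq
  have h1a : (0:ℝ) < 1 - 2*δ/5 := by linarith
  have hρ1 : 1 ≤ ρsq := by
    rw [hρsq]
    rw [div_pow, le_div_iff₀ (by positivity)]
    nlinarith
  set W₀ : ℕ := ⌈2/δ⌉₊ + 1 with hW₀
  have hW1 : 1 ≤ W₀ := by omega
  have h2W : 2 ≤ δ * W₀ := by
    have h1 : 2/δ ≤ (W₀:ℝ) := by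
      have := Nat.le_ceil (2/δ)
      have h2 : ((⌈2/δ⌉₊:ℕ):ℝ) ≤ W₀ := by exact_mod_cast Nat.le_succ _
      linarith
    calc (2:ℝ) = δ * (2/δ) := by field_simp
    _ ≤ δ * W₀ := by apply mul_le_mul_of_nonneg_left h1 (le_of_lt hδ0)
  set w : ℕ → ℕ := wseq ρsq W₀ with hw
  have hw1 : ∀ j, 1 ≤ w j := fun j => le_trans hW1 (wseq_ge ρsq W₀ hρ1 hW1 j)
  have hgrow : ∀ i j : ℕ, i < j → ρsq * w i < w j :=
    fun i j hij => wseq_growth_lt ρsq W₀ hρ1 hW1 i j hij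
  have hwub : ∀ j, (w j : ℝ) ≤ W₀ * (ρsq + δ)^j := wseq_upper ρsq W₀ hρ1 hW1 δ hδ0 h2W
  have hρδ : ρsq + δ ≤ 1 + 6*δ := by
    have : ρsq ≤ 1 + 5*δ := by
      rw [hρsq, div_pow, div_le_iff₀ (by positivity)]
      nlinarith
    linarith
  -- choice of L
  set sqε : ℝ := Real.sqrt ε with hsqε
  have hsqε0 : 0 < sqε := Real.sqrt_pos.mpr hε
  set A : ℕ := k * S.card * W₀ with hA
  have hA1 : 1 ≤ A := by
    rw [hA]
    exact Nat.one_le_iff_ne_zero.mpr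
      (Nat.mul_ne_zero (Nat.mul_ne_zero (by omega) (by omega)) (by omega))
  have hlogA : 0 ≤ Real.log A := Real.log_nonneg (by exact_mod_cast hA1)
  set L : ℕ := N + 1 + ⌈2*Real.log A/(17*sqε)⌉₊ + ⌈16/(289*ε)⌉₊ with hL
  have hL1 : 1 ≤ L := by omega
  -- apply construction
  obtain ⟨X, hX⟩ := kmeans_construction (d := d) (by omega) k L hk ε δ hε hδ0 hδ1 hδsq
    S hSne hSnorm hSsep w hw1 (by rw [← hρsq]; exact hgrow)
  have hLsum : L ≤ ∑ j ∈ Finset.range L, w j := by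
    calc L = ∑ _j ∈ Finset.range L, 1 := by simp
    _ ≤ ∑ j ∈ Finset.range L, w j := Finset.sum_le_sum (fun j _ => hw1 j)
  have hnL : L ≤ k * S.card * ∑ j ∈ Finset.range L, w j := by
    calc L ≤ ∑ j ∈ Finset.range L, w j := hLsum
    _ ≤ k * S.card * ∑ j ∈ Finset.range L, w j := by
        apply Nat.le_mul_of_pos_left
        exact Nat.mul_pos (by omega) (by omega)
  refine ⟨k * S.card * ∑ j ∈ Finset.range L, w j, by omega, X, ?_⟩
  intro ξ hξne hξcost
  have hmain := hX ξ hξne hξcost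
  set n : ℕ := k * S.card * ∑ j ∈ Finset.range L, w j with hn
  have hn1 : 1 ≤ n := le_trans hL1 hnL
  -- log bound
  have hnub : (n:ℝ) ≤ (A:ℝ) * L * (1+6*δ)^L := by
    have hwub' : ∀ j ∈ Finset.range L, (w j:ℝ) ≤ (W₀:ℝ) * (1+6*δ)^L := by
      intro j hj
      refine le_trans (hwub j) ?_
      have h1 : (ρsq + δ)^j ≤ (1+6*δ)^j :=
        pow_le_pow_left₀ (by positivity) hρδ j
      have h2 : (1+6*δ)^j ≤ (1+6*δ)^L :=
        pow_le_pow_right₀ (by linarith) (le_of_lt (Finset.mem_range.mp hj))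
      have := le_trans h1 h2
      exact mul_le_mul_of_nonneg_left this (by positivity)
    have hsum : (∑ j ∈ Finset.range L, (w j:ℝ)) ≤ L * ((W₀:ℝ) * (1+6*δ)^L) := by
      calc (∑ j ∈ Finset.range L, (w j:ℝ)) ≤ ∑ _j ∈ Finset.range L, (W₀:ℝ) * (1+6*δ)^L :=
        Finset.sum_le_sum hwub'
      _ = L * ((W₀:ℝ) * (1+6*δ)^L) := by rw [Finset.sum_const, Finset.card_range, nsmul_eq_mul]
    have hnr : (n:ℝ) = (k:ℝ) * S.card * (∑ j ∈ Finset.range L, (w j:ℝ)) := by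
      rw [hn]; push_cast; ring
    have hAr : (A:ℝ) = (k:ℝ) * S.card * W₀ := by rw [hA]; push_cast; ring
    have hks : (0:ℝ) ≤ (k:ℝ) * S.card := by positivity
    calc (n:ℝ) = (k:ℝ) * S.card * (∑ j ∈ Finset.range L, (w j:ℝ)) := hnr
    _ ≤ (k:ℝ) * S.card * ((L:ℝ) * ((W₀:ℝ) * (1+6*δ)^L)) :=
        mul_le_mul_of_nonneg_left hsum hks
    _ = (A:ℝ) * L * (1+6*δ)^L := by rw [hAr]; ring
  have hlogn : Real.log n ≤ Real.log A + Real.log L + L * (6*δ) := by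
    have h1 : Real.log n ≤ Real.log ((A:ℝ) * L * (1+6*δ)^L) :=
      Real.log_le_log (by exact_mod_cast hn1) hnub
    have hA0 : (0:ℝ) < A := by exact_mod_cast hA1
    have hL0 : (0:ℝ) < L := by exact_mod_cast hL1
    rw [Real.log_mul (by positivity) (by positivity), Real.log_mul (by positivity) (by positivity),
      Real.log_pow] at h1
    have hlog6 : Real.log (1+6*δ) ≤ 6*δ := by
      have := Real.log_le_sub_one_of_pos (show (0:ℝ) < 1+6*δ by linarith)
      linarith
    have : (L:ℝ) * Real.log (1+6*δ) ≤ L * (6*δ) :=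
      mul_le_mul_of_nonneg_left hlog6 (by positivity)
    linarith
  -- three bounds
  have hb1 : Real.log A ≤ (17/2) * sqε * L := by
    have h1 : 2*Real.log A/(17*sqε) ≤ (L:ℝ) := by
      have h2 := Nat.le_ceil (2*Real.log A/(17*sqε))
      have h3 : ((⌈2*Real.log A/(17*sqε)⌉₊:ℕ):ℝ) ≤ (L:ℝ) := by
        exact_mod_cast by omega
      linarith
    rw [div_le_iff₀ (by positivity)] at h1
    linarith
  have hb2 : Real.log L ≤ (17/2) * sqε * L := by
    have hL0 : (0:ℝ) < L := by exact_mod_cast hL1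
    have hsL : (1:ℝ) ≤ Real.sqrt L := by
      rw [show (1:ℝ) = Real.sqrt 1 by simp]
      exact Real.sqrt_le_sqrt (by exact_mod_cast hL1)
    have hlogL : Real.log L ≤ 2 * Real.sqrt L := by
      have h1 : Real.log L = 2 * Real.log (Real.sqrt L) := by
        conv_lhs => rw [← Real.sq_sqrt (le_of_lt hL0)]
        rw [Real.log_pow]
        norm_num
      have h2 : Real.log (Real.sqrt L) ≤ Real.sqrt L - 1 :=
        Real.log_le_sub_one_of_pos (by linarith)
      rw [h1]; linarith
    have hLlb : 16/(289*ε) ≤ (L:ℝ) := by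
      have h2 := Nat.le_ceil (16/(289*ε))
      have h3 : ((⌈16/(289*ε)⌉₊:ℕ):ℝ) ≤ (L:ℝ) := by exact_mod_cast by omega
      linarith
    have hsqL : 4/(17*sqε) ≤ Real.sqrt L := by
      have h1 : Real.sqrt (16/(289*ε)) ≤ Real.sqrt L := Real.sqrt_le_sqrt hLlb
      have h2 : Real.sqrt (16/(289*ε)) = 4/(17*sqε) := by
        rw [Real.sqrt_div (by norm_num) (289*ε), Real.sqrt_mul (by norm_num) ε]
        rw [show (16:ℝ) = 4^2 by norm_num, Real.sqrt_sq (by norm_num)]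
        rw [show (289:ℝ) = 17^2 by norm_num, Real.sqrt_sq (by norm_num)]
      linarith
    have key : 2 * Real.sqrt L ≤ (17/2) * sqε * L := by
      have hLeq : (L:ℝ) = Real.sqrt L * Real.sqrt L := (Real.mul_self_sqrt (le_of_lt hL0)).symm
      have h4 : 4/(17*sqε) * ((17/2) * sqε) ≤ Real.sqrt L * ((17/2) * sqε) :=
        mul_le_mul_of_nonneg_right hsqL (by positivity)
      have h5 : 4/(17*sqε) * ((17/2) * sqε) = 2 := by field_simp; ring
      calc 2 * Real.sqrt L = (4/(17*sqε) * ((17/2) * sqε)) * Real.sqrt L := by rw [h5]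
      _ ≤ (Real.sqrt L * ((17/2) * sqε)) * Real.sqrt L := by
          apply mul_le_mul_of_nonneg_right h4 (Real.sqrt_nonneg _)
      _ = (17/2) * sqε * (Real.sqrt L * Real.sqrt L) := by ring
      _ = (17/2) * sqε * L := by rw [← hLeq]
    linarith
  have hb3 : (L:ℝ) * (6*δ) ≤ 17 * sqε * L := by
    have h68 : 6*δ ≤ 17*sqε := by
      have h1 : δ = Real.sqrt 8 * sqε := by
        rw [hδ, hsqε, ← Real.sqrt_mul (by norm_num)]
      have h2 : Real.sqrt 8 ≤ 17/6 := by
        have h3 : Real.sqrt 8 ≤ Real.sqrt ((17/6)^2) := Real.sqrt_le_sqrt (by norm_num)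
        rwa [Real.sqrt_sq (by norm_num)] at h3
      rw [h1]
      nlinarith [hsqε0]
    have hL0 : (0:ℝ) ≤ L := by positivity
    nlinarith
  have hlogn2 : Real.log n ≤ 34 * sqε * L := by linarith
  -- final arithmetic
  rw [← hScard]
  have hP0 : (0:ℝ) < S.card := by exact_mod_cast hScard1
  have hk0 : (0:ℝ) < k := by exact_mod_cast hk
  have hL0 : (0:ℝ) ≤ L := by positivity
  have hlogn0 : 0 ≤ Real.log n := Real.log_nonneg (by exact_mod_cast hn1)
  refine le_trans ?_ hmain
  rw [div_le_iff₀ hsqε0]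
  calc (1:ℝ)/256 * S.card * k * Real.log n ≤ 1/256 * S.card * k * (34 * sqε * L) := by
        apply mul_le_mul_of_nonneg_left hlogn2 (by positivity)
  _ = (34/256) * ((k:ℝ) * S.card * L) * sqε := by ring
  _ ≤ (7/32 * ((k:ℝ) * S.card * L)) * sqε := by
        have : (0:ℝ) ≤ (k:ℝ) * S.card * L * sqε := by positivity
        nlinarith


/-- lower bound for Euclidean k-means. There is a universal
constant `c > 0` such that for every `d ≥ 2`, `0 < ε < 1/8`, `k ≥ 1`, there are
arbitrarily large `n` and a family `X` of `n` points in `ℝ^d` (repetitions allowed)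
such that every finite nonempty set `ξ ⊆ ℝ^d` with `Φ(ξ, X) ≤ ε · Δ_k(X)` has
`|ξ| ≥ c · P(S^{d-1}, √(8ε)) · k · log n / √ε`. -/
theorem kmeans_lower_bound :
    ∃ c : ℝ, 0 < c ∧
      ∀ d : ℕ, 2 ≤ d →
      ∀ ε : ℝ, 0 < ε → ε < 1 / 8 →
      ∀ k : ℕ, 1 ≤ k →
      ∀ N : ℕ, ∃ n : ℕ, N ≤ n ∧
        ∃ X : Fin n → EuclideanSpace ℝ (Fin d),
          ∀ ξ : Finset (EuclideanSpace ℝ (Fin d)), ξ.Nonempty →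
            kmeansCost ξ X ≤ ε * kmeansOpt k X →
            c * (packingNumber d (Real.sqrt (8 * ε)) : ℝ) * k * Real.log n / Real.sqrt ε
              ≤ (ξ.card : ℝ) := by
  exact kmeans_lower_bound'
end

section
/- There is a universal constant c > 0 such that the following holds. Let (𝒳, D) be a metric space of doubling dimension at most d. For every ε with 0 < ε ≤ 1, every integer k ≥ 1, and every finite family X of n ≥ 2 points in 𝒳, there exists a finite set ξ ⊆ 𝒳 with |ξ| ≤ c · k · (log n) · (8/ε)^d such that Φ(ξ, X) ≤ ε · Δ_k(X). -/
set_option maxHeartbeats 1000000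

open scoped ENNReal

/-- A metric space `𝒳` has doubling dimension at most `d` if every subset
`X ⊆ 𝒳` can be covered by at most `2^d` subsets, each of diameter at most
`dia(X)/2` (diameters taken in `ℝ≥0∞` to handle unbounded sets). -/
def DoublingDimLE (𝒳 : Type*) [MetricSpace 𝒳] (d : ℕ) : Prop :=
  ∀ X : Set 𝒳, ∃ 𝒞 : Finset (Set 𝒳), 𝒞.card ≤ 2 ^ d ∧
    X ⊆ ⋃₀ (𝒞 : Set (Set 𝒳)) ∧
    ∀ Y ∈ 𝒞, EMetric.diam Y ≤ EMetric.diam X / 2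

/-- Metric k-median cost of a family `X : Fin n → 𝒳` with respect to a finite
(nonempty) center set `C ⊆ 𝒳`: `Φ(C, X) = Σ_i min_{c ∈ C} D(X i, c)`. -/
noncomputable def medCost {𝒳 : Type*} [MetricSpace 𝒳] {n : ℕ}
    (C : Finset 𝒳) (X : Fin n → 𝒳) : ℝ :=
  ∑ i, sInf ((fun c => dist (X i) c) '' (C : Set 𝒳))

/-- Optimal metric k-median cost `Δ_k(X)`: infimum of `Φ(C, X)` over sets
`C ⊆ 𝒳` with `|C| = k`. -/
noncomputable def medOpt {𝒳 : Type*} [MetricSpace 𝒳] {n : ℕ}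
    (k : ℕ) (X : Fin n → 𝒳) : ℝ :=
  sInf {r : ℝ | ∃ C : Finset 𝒳, C.card = k ∧ medCost C X = r}

lemma term_nonneg {𝒳 : Type*} [MetricSpace 𝒳] (x : 𝒳) (C : Finset 𝒳) :
    0 ≤ sInf ((fun c => dist x c) '' (C : Set 𝒳)) :=
  Real.sInf_nonneg (by rintro r ⟨c, _, rfl⟩; exact dist_nonneg)

lemma term_bdd {𝒳 : Type*} [MetricSpace 𝒳] (x : 𝒳) (C : Finset 𝒳) :
    BddBelow ((fun c => dist x c) '' (C : Set 𝒳)) :=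
  ⟨0, by rintro r ⟨c, _, rfl⟩; exact dist_nonneg⟩

lemma medCost_nonneg {𝒳 : Type*} [MetricSpace 𝒳] {n : ℕ} (C : Finset 𝒳) (X : Fin n → 𝒳) :
    0 ≤ medCost C X :=
  Finset.sum_nonneg fun i _ => term_nonneg (X i) C

lemma medOpt_nonneg {𝒳 : Type*} [MetricSpace 𝒳] {n : ℕ} (k : ℕ) (X : Fin n → 𝒳) :
    0 ≤ medOpt k X :=
  Real.sInf_nonneg (by rintro r ⟨C, _, rfl⟩; exact medCost_nonneg C X)

lemma medCost_le_sum {𝒳 : Type*} [MetricSpace 𝒳] {n : ℕ} (ξ : Finset 𝒳) (X : Fin n → 𝒳)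
    (b : Fin n → ℝ) (h : ∀ i, ∃ q ∈ ξ, dist (X i) q ≤ b i) :
    medCost ξ X ≤ ∑ i, b i := by
  apply Finset.sum_le_sum
  intro i _
  obtain ⟨q, hq, hle⟩ := h i
  exact le_trans (csInf_le (term_bdd (X i) ξ) ⟨q, hq, rfl⟩) hle

lemma cover_iter {𝒳 : Type*} [MetricSpace 𝒳] {d : ℕ} (hd : DoublingDimLE 𝒳 d)
    (t : ℕ) (S : Set 𝒳) :
    ∃ 𝒞 : Finset (Set 𝒳), 𝒞.card ≤ 2 ^ (d * t) ∧ S ⊆ ⋃₀ (𝒞 : Set (Set 𝒳)) ∧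
      ∀ Y ∈ 𝒞, EMetric.diam Y ≤ EMetric.diam S / 2 ^ t := by
  classical
  induction t with
  | zero => exact ⟨{S}, by simp, by simp, by simp⟩
  | succ t ih =>
    obtain ⟨𝒞, h1, h2, h3⟩ := ih
    choose D hD1 hD2 hD3 using fun Y : Set 𝒳 => hd Y
    refine ⟨𝒞.biUnion D, ?_, ?_, ?_⟩
    · calc (𝒞.biUnion D).card ≤ ∑ Y ∈ 𝒞, (D Y).card := Finset.card_biUnion_le
        _ ≤ ∑ _Y ∈ 𝒞, 2 ^ d := Finset.sum_le_sum fun Y _ => hD1 Y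
        _ = 𝒞.card * 2 ^ d := by rw [Finset.sum_const, smul_eq_mul]
        _ ≤ 2 ^ (d * t) * 2 ^ d := Nat.mul_le_mul_right _ h1
        _ = 2 ^ (d * (t + 1)) := by ring
    · intro x hx
      obtain ⟨Y, hY, hxY⟩ := h2 hx
      obtain ⟨Z, hZ, hxZ⟩ := hD2 Y hxY
      exact ⟨Z, Finset.mem_coe.mpr (Finset.mem_biUnion.mpr ⟨Y, hY, hZ⟩), hxZ⟩
    · intro Z hZ
      obtain ⟨Y, hY, hZY⟩ := Finset.mem_biUnion.mp hZ
      calc EMetric.diam Z ≤ EMetric.diam Y / 2 := hD3 Y Z hZY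
        _ ≤ EMetric.diam S / 2 ^ t / 2 := ENNReal.div_le_div (h3 Y hY) le_rfl
        _ = EMetric.diam S / 2 ^ (t + 1) := by
          rw [div_eq_mul_inv, div_eq_mul_inv, div_eq_mul_inv, mul_assoc, pow_succ,
            ENNReal.mul_inv (Or.inl (by positivity)) (Or.inl (by simp))]

lemma net_of_ball {𝒳 : Type*} [MetricSpace 𝒳] {d : ℕ} (hd : DoublingDimLE 𝒳 d)
    (c : 𝒳) (R : ℝ) (hR : 0 ≤ R) (t : ℕ) (P : Finset 𝒳) (hP : ∀ p ∈ P, dist p c ≤ R) :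
    ∃ ξ : Finset 𝒳, ξ.card ≤ 2 ^ (d * t) ∧
      ∀ p ∈ P, ∃ q ∈ ξ, dist p q ≤ 2 * R / 2 ^ t := by
  classical
  obtain ⟨𝒞, h1, h2, h3⟩ := cover_iter hd t (EMetric.closedBall c (ENNReal.ofReal R))
  set f : Set 𝒳 → 𝒳 := fun Y => if h : ∃ p, p ∈ P ∧ p ∈ Y then h.choose else c with hf
  refine ⟨𝒞.image f, (Finset.card_image_le).trans h1, ?_⟩
  intro p hp
  have hpS : p ∈ EMetric.closedBall c (ENNReal.ofReal R) := by
    change edist p c ≤ ENNReal.ofReal R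
    rw [edist_dist]
    exact ENNReal.ofReal_le_ofReal (hP p hp)
  obtain ⟨Y, hY, hpY⟩ := h2 hpS
  have hex : ∃ q, q ∈ P ∧ q ∈ Y := ⟨p, hp, hpY⟩
  refine ⟨f Y, Finset.mem_image_of_mem f (Finset.mem_coe.mp hY), ?_⟩
  have hq : f Y ∈ P ∧ f Y ∈ Y := by
    rw [hf]; simp only [dif_pos hex]; exact hex.choose_spec
  have hed : edist p (f Y) ≤ EMetric.diam (EMetric.closedBall c (ENNReal.ofReal R)) / 2 ^ t :=
    le_trans (EMetric.edist_le_diam_of_mem hpY hq.2) (h3 Y (Finset.mem_coe.mp hY))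
  have h2t : (0:ℝ) < 2 ^ t := by positivity
  have hbd : EMetric.diam (EMetric.closedBall c (ENNReal.ofReal R)) / 2 ^ t
      ≤ ENNReal.ofReal (2 * R / 2 ^ t) := by
    rw [ENNReal.ofReal_div_of_pos h2t]
    apply ENNReal.div_le_div _ _
    · calc EMetric.diam (EMetric.closedBall c (ENNReal.ofReal R))
          ≤ 2 * ENNReal.ofReal R := EMetric.diam_closedBall
        _ = ENNReal.ofReal (2 * R) := by
          rw [ENNReal.ofReal_mul (by norm_num : (0:ℝ) ≤ 2)]; norm_num
    · rw [ENNReal.ofReal_pow (by norm_num : (0:ℝ) ≤ 2)]; norm_num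
  have := le_trans hed hbd
  rw [edist_dist] at this
  exact (ENNReal.ofReal_le_ofReal_iff (by positivity)).mp this


lemma degenerate_case {𝒳 : Type*} [MetricSpace 𝒳] {k n : ℕ} (hk : 1 ≤ k) (hn : 2 ≤ n)
    (X : Fin n → 𝒳) (hΔ : medOpt k X ≤ 0) :
    ∃ ξ : Finset 𝒳, ξ.Nonempty ∧ ξ.card ≤ k ∧ medCost ξ X ≤ 0 := by
  classical
  set V : Finset 𝒳 := Finset.image X Finset.univ with hV
  have hVne : V.Nonempty := Finset.Nonempty.image ⟨⟨0, by omega⟩, Finset.mem_univ _⟩ X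
  refine ⟨V, hVne, ?_, ?_⟩
  · -- card V ≤ k
    by_contra hvk
    push_neg at hvk
    obtain ⟨C0, _, hC0⟩ := Finset.exists_subset_card_eq hvk.le
    have hs : Set.Nonempty {r : ℝ | ∃ C : Finset 𝒳, C.card = k ∧ medCost C X = r} :=
      ⟨medCost C0 X, C0, hC0, rfl⟩
    -- minimum pairwise distance
    obtain ⟨a, haV, b, hbV, hab⟩ := Finset.one_lt_card.mp (show 1 < V.card by omega)
    have hT : V.offDiag.Nonempty := ⟨(a, b), Finset.mem_offDiag.mpr ⟨haV, hbV, hab⟩⟩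
    set ρ : ℝ := V.offDiag.inf' hT (fun p => dist p.1 p.2) with hρ
    have hρpos : 0 < ρ := by
      rw [hρ, Finset.lt_inf'_iff]
      intro p hp
      exact dist_pos.mpr (Finset.mem_offDiag.mp hp).2.2
    have key : ∀ C : Finset 𝒳, C.card = k → ρ / 2 ≤ medCost C X := by
      intro C hCk
      set W : Finset 𝒳 := V.filter (fun v => ∃ c ∈ C, dist v c < ρ / 2) with hW
      have hWk : W.card ≤ k := by
        rw [← hCk]
        apply Finset.card_le_card_of_injOn
          (fun v => if h : ∃ c ∈ C, dist v c < ρ / 2 then h.choose else v)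
        · intro v hv
          have h := (Finset.mem_filter.mp hv).2
          simp only [dif_pos h]
          exact h.choose_spec.1
        · intro v hv w hw hvw
          by_contra hne
          have hvV := (Finset.mem_filter.mp (Finset.mem_coe.mp hv)).1
          have hwV := (Finset.mem_filter.mp (Finset.mem_coe.mp hw)).1
          have hv' := (Finset.mem_filter.mp (Finset.mem_coe.mp hv)).2
          have hw' := (Finset.mem_filter.mp (Finset.mem_coe.mp hw)).2
          simp only [dif_pos hv', dif_pos hw'] at hvw
          have h1 : dist v hv'.choose < ρ / 2 := hv'.choose_spec.2
          have h2 : dist w hw'.choose < ρ / 2 := hw'.choose_spec.2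
          have hle : ρ ≤ dist v w := by
            rw [hρ]
            exact Finset.inf'_le (fun p => dist p.1 p.2)
              (show (v, w) ∈ V.offDiag from Finset.mem_offDiag.mpr ⟨hvV, hwV, hne⟩)
          have : dist v w ≤ dist v hv'.choose + dist hw'.choose w := by
            rw [← hvw]; exact dist_triangle v hv'.choose w
          rw [dist_comm hw'.choose w] at this
          linarith
      have hWV : W ⊆ V := Finset.filter_subset _ _
      have : ¬ (V ⊆ W) := fun h => by
        have := Finset.card_le_card h; omega
      obtain ⟨v, hvV, hvW⟩ := Finset.not_subset.mp this
      obtain ⟨i, _, rfl⟩ := Finset.mem_image.mp hvV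
      have hfar : ∀ c ∈ C, ρ / 2 ≤ dist (X i) c := by
        intro c hc
        by_contra h
        exact hvW (Finset.mem_filter.mpr ⟨hvV, ⟨c, hc, by linarith⟩⟩)
      have hCne : C.Nonempty := Finset.card_pos.mp (by omega)
      have hterm : ρ / 2 ≤ sInf ((fun c => dist (X i) c) '' (C : Set 𝒳)) := by
        apply le_csInf ((Set.image_nonempty (f := fun c => dist (X i) c)).mpr
          (Finset.coe_nonempty.mpr hCne))
        rintro r ⟨c, hc, rfl⟩
        exact hfar c hc
      calc ρ / 2 ≤ sInf ((fun c => dist (X i) c) '' (C : Set 𝒳)) := hterm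
        _ ≤ medCost C X :=
          Finset.single_le_sum (fun j _ => term_nonneg (X j) C) (Finset.mem_univ i)
    have : ρ / 2 ≤ medOpt k X := by
      apply le_csInf hs
      rintro r ⟨C, hC, rfl⟩
      exact key C hC
    linarith
  · -- cost ≤ 0
    have := medCost_le_sum V X (fun _ => 0) (fun i =>
      ⟨X i, Finset.mem_image_of_mem X (Finset.mem_univ i), by simp⟩)
    simpa using this


lemma main_case {𝒳 : Type*} [MetricSpace 𝒳] {d : ℕ} (hd : DoublingDimLE 𝒳 d)
    {ε : ℝ} (hε : 0 < ε) (hε1 : ε ≤ 1) {k n : ℕ} (hk : 1 ≤ k) (hn : 2 ≤ n)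
    (X : Fin n → 𝒳) (hΔ : 0 < medOpt k X) :
    ∃ ξ : Finset 𝒳, ξ.Nonempty ∧
      (ξ.card : ℝ) ≤ 100 * k * Real.log n * (8 / ε) ^ d ∧
      medCost ξ X ≤ ε * medOpt k X := by
  classical
  set Δ : ℝ := medOpt k X with hΔdef
  set s : Set ℝ := {r : ℝ | ∃ C : Finset 𝒳, C.card = k ∧ medCost C X = r} with hsdef
  have hsbdd : BddBelow s := ⟨0, by rintro r ⟨C, _, rfl⟩; exact medCost_nonneg C X⟩
  have hs : s.Nonempty := by
    by_contra h
    rw [Set.not_nonempty_iff_eq_empty] at h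
    have : Δ = 0 := by rw [hΔdef, medOpt, ← hsdef, h, Real.sInf_empty]
    linarith
  -- pick a near-optimal center set
  have hlt : sInf s < (25 / 24) * Δ := by
    have : sInf s = Δ := rfl
    rw [this]; linarith
  obtain ⟨Φ', ⟨C, hCk, hCΦ⟩, hΦlt⟩ := (csInf_lt_iff hsbdd hs).mp hlt
  set Φ : ℝ := medCost C X with hΦdef
  have hΦlt : Φ < (25 / 24) * Δ := by rw [hCΦ]; exact hΦlt
  have hΔΦ : Δ ≤ Φ := csInf_le hsbdd ⟨C, hCk, hΦdef.symm⟩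
  have hΦpos : 0 < Φ := lt_of_lt_of_le hΔ hΔΦ
  have hCne : C.Nonempty := Finset.card_pos.mp (by omega)
  -- distances to nearest centers
  set r : Fin n → ℝ := fun i => sInf ((fun c => dist (X i) c) '' (C : Set 𝒳)) with hrdef
  have hrsum : Φ = ∑ i, r i := rfl
  have hrnn : ∀ i, 0 ≤ r i := fun i => term_nonneg (X i) C
  have hrΦ : ∀ i, r i ≤ Φ := by
    intro i
    rw [hrsum]
    exact Finset.single_le_sum (fun j _ => hrnn j) (Finset.mem_univ i)
  have hcc : ∀ i, ∃ c ∈ C, dist (X i) c = r i := by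
    intro i
    have hne : ((fun c => dist (X i) c) '' (C : Set 𝒳)).Nonempty :=
      (Set.image_nonempty).mpr (Finset.coe_nonempty.mpr hCne)
    have hfin : ((fun c => dist (X i) c) '' (C : Set 𝒳)).Finite :=
      Set.Finite.image _ (C.finite_toSet)
    obtain ⟨c, hc, hceq⟩ := Set.Nonempty.csInf_mem hne hfin
    exact ⟨c, hc, hceq⟩
  choose cc hcc1 hcc2 using hcc
  -- scales
  have hεn : (0:ℝ) < n := by positivity
  set ρ0 : ℝ := Φ / (n : ℝ) ^ 2 with hρ0def
  have hρ0pos : 0 < ρ0 := by positivity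
  set θ : ℝ := 7 / 5 with hθdef
  have hθpos : (0:ℝ) < θ := by norm_num
  -- the net resolution parameter t
  set t : ℕ := Nat.log 2 ⌊(8:ℝ)/ε⌋₊ with htdef
  have h8ε : (8:ℝ) ≤ 8 / ε := by
    rw [le_div_iff₀ hε]; nlinarith
  have hfl1 : 1 ≤ ⌊(8:ℝ)/ε⌋₊ := Nat.le_floor (by push_cast; linarith)
  have h2t_le : (2:ℝ) ^ t ≤ 8 / ε := by
    calc ((2:ℝ)) ^ t = ((2 ^ t : ℕ) : ℝ) := by push_cast; ring
      _ ≤ ((⌊(8:ℝ)/ε⌋₊ : ℕ) : ℝ) := by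
          exact_mod_cast Nat.pow_log_le_self 2 (by omega)
      _ ≤ 8 / ε := Nat.floor_le (by linarith)
  have h2t_ge : (4:ℝ) / ε ≤ 2 ^ t := by
    have h1 : (8:ℝ)/ε < ((⌊(8:ℝ)/ε⌋₊ : ℕ) : ℝ) + 1 := Nat.lt_floor_add_one _
    have h2 : (⌊(8:ℝ)/ε⌋₊ : ℕ) + 1 ≤ 2 ^ (t + 1) :=
      Nat.succ_le_of_lt (Nat.lt_pow_succ_log_self (by norm_num) _)
    have h3 : ((⌊(8:ℝ)/ε⌋₊ : ℕ) : ℝ) + 1 ≤ 2 ^ (t+1) := by exact_mod_cast h2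
    have : (8:ℝ)/ε < 2 ^ (t+1) := by linarith
    rw [pow_succ] at this
    have h4 : (4:ℝ)/ε = (8/ε)/2 := by ring
    linarith
  have h2tpos : (0:ℝ) < 2 ^ t := by positivity
  -- the number of scales J
  set J : ℕ := 7 * ⌈Real.log n⌉₊ with hJdef
  have hlogn : Real.log 2 ≤ Real.log n := Real.log_le_log (by norm_num) (by exact_mod_cast hn)
  have hlog2 : (0.6931471803 : ℝ) < Real.log 2 := Real.log_two_gt_d9
  have hlogθ : (2:ℝ)/7 ≤ Real.log θ := by
    rw [Real.le_log_iff_exp_le (by norm_num : (0:ℝ) < θ), hθdef]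
    have h1 := Real.add_one_le_exp (-(2/7) : ℝ)
    have h5 : (5:ℝ)/7 ≤ Real.exp (-(2/7)) := by linarith
    have hepos : (0:ℝ) < Real.exp (-(2/7)) := Real.exp_pos _
    have : Real.exp ((2:ℝ)/7) = (Real.exp (-(2/7)))⁻¹ := by
      rw [← Real.exp_neg]; norm_num
    rw [this]
    calc (Real.exp (-(2/7)))⁻¹ ≤ ((5:ℝ)/7)⁻¹ := by
          apply inv_anti₀ (by norm_num) h5
      _ = 7/5 := by norm_num
  have hΦρ : Φ = (n:ℝ) ^ 2 * ρ0 := by rw [hρ0def]; field_simp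
  have hθJ : (n:ℝ) ^ 2 ≤ θ ^ J := by
    have hceil : Real.log n ≤ (⌈Real.log n⌉₊ : ℝ) := Nat.le_ceil _
    have hlogpow : Real.log ((n:ℝ) ^ 2) ≤ Real.log (θ ^ J) := by
      rw [Real.log_pow, Real.log_pow, hJdef]
      push_cast
      nlinarith
    have hn2pos : (0:ℝ) < (n:ℝ) ^ 2 := by positivity
    exact (Real.log_le_log_iff hn2pos (by positivity)).mp hlogpow
  -- ring index of each point
  set idx : Fin n → ℕ := fun i =>
    if r i ≤ ρ0 then 0 else Nat.findGreatest (fun j => θ ^ j * ρ0 < r i) J + 1 with hidxdef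
  have hidx : ∀ i, idx i ≤ J ∧ r i ≤ θ ^ (idx i) * ρ0 ∧ θ ^ (idx i) * ρ0 ≤ ρ0 + θ * r i := by
    intro i
    by_cases h : r i ≤ ρ0
    · have : idx i = 0 := by rw [hidxdef]; simp [h]
      rw [this]
      refine ⟨Nat.zero_le J, by simpa using h, ?_⟩
      simp only [pow_zero, one_mul]
      nlinarith [hrnn i]
    · set P : ℕ → Prop := fun j => θ ^ j * ρ0 < r i with hPdef
      have hP0 : P 0 := by rw [hPdef]; simpa using lt_of_not_ge h
      have hPJ : ¬ P J := by
        rw [hPdef]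
        simp only [not_lt]
        calc r i ≤ Φ := hrΦ i
          _ = (n:ℝ) ^ 2 * ρ0 := hΦρ
          _ ≤ θ ^ J * ρ0 := mul_le_mul_of_nonneg_right hθJ hρ0pos.le
      have hidxi : idx i = Nat.findGreatest P J + 1 := by rw [hidxdef]; simp [h, hPdef]
      have hPg : P (Nat.findGreatest P J) := Nat.findGreatest_spec (Nat.zero_le J) hP0
      have hgJ : Nat.findGreatest P J < J := by
        rcases lt_or_eq_of_le (Nat.findGreatest_le (P := P) J) with h' | h'
        · exact h'
        · exact absurd (h' ▸ hPg) hPJ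
      have hsucc : ¬ P (Nat.findGreatest P J + 1) :=
        Nat.findGreatest_is_greatest (Nat.lt_succ_self _) hgJ
      have hg1 : r i ≤ θ ^ (Nat.findGreatest P J + 1) * ρ0 := not_lt.mp hsucc
      have hg2 : θ ^ (Nat.findGreatest P J) * ρ0 < r i := hPg
      refine ⟨by omega, by rw [hidxi]; exact hg1, ?_⟩
      rw [hidxi, pow_succ, mul_comm (θ ^ Nat.findGreatest P J) θ, mul_assoc]
      nlinarith [mul_lt_mul_of_pos_left hg2 hθpos, hρ0pos.le]
  -- nets for each center and scale
  have hnets : ∀ q : 𝒳 × ℕ, ∃ ξq : Finset 𝒳, ξq.card ≤ 2 ^ (d * t) ∧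
      ∀ i : Fin n, cc i = q.1 → idx i = q.2 → ∃ z ∈ ξq, dist (X i) z ≤ 2 * (θ ^ q.2 * ρ0) / 2 ^ t := by
    intro q
    obtain ⟨ξq, hcard, hprop⟩ := net_of_ball hd q.1 (θ ^ q.2 * ρ0) (by positivity) t
      ((Finset.univ.filter (fun i => cc i = q.1 ∧ idx i = q.2)).image X)
      (by
        intro p hp
        obtain ⟨i, hi, rfl⟩ := Finset.mem_image.mp hp
        obtain ⟨h1, h2⟩ := (Finset.mem_filter.mp hi).2
        rw [← h1, hcc2 i, ← h2]
        exact (hidx i).2.1)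
    refine ⟨ξq, hcard, ?_⟩
    intro i h1 h2
    exact hprop (X i) (Finset.mem_image_of_mem X (Finset.mem_filter.mpr ⟨Finset.mem_univ i, h1, h2⟩))
  choose net hnetcard hnetprop using hnets
  set ξ : Finset 𝒳 := ((C ×ˢ Finset.range (J + 1)).biUnion net) ∪ C with hξdef
  have hCξ : C ⊆ ξ := Finset.subset_union_right
  refine ⟨ξ, hCne.mono hCξ, ?_, ?_⟩
  · -- cardinality bound
    have hξcard : ξ.card ≤ k * (J + 1) * 2 ^ (d * t) + k := by
      calc ξ.card ≤ ((C ×ˢ Finset.range (J + 1)).biUnion net).card + C.card :=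
            Finset.card_union_le _ _
        _ ≤ (∑ q ∈ C ×ˢ Finset.range (J + 1), (net q).card) + k := by
            rw [hCk]; exact Nat.add_le_add_right Finset.card_biUnion_le k
        _ ≤ (∑ _q ∈ C ×ˢ Finset.range (J + 1), 2 ^ (d * t)) + k := by
            exact Nat.add_le_add_right (Finset.sum_le_sum fun q _ => hnetcard q) k
        _ = k * (J + 1) * 2 ^ (d * t) + k := by
            rw [Finset.sum_const, smul_eq_mul, Finset.card_product, Finset.card_range, hCk]
    have hpow : ((2:ℝ)) ^ (d * t) ≤ (8 / ε) ^ d := by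
      rw [mul_comm d t, pow_mul]
      exact pow_le_pow_left₀ (by positivity) h2t_le d
    have hpow1 : (1:ℝ) ≤ (8 / ε) ^ d := one_le_pow₀ (by linarith)
    have hk1 : (1:ℝ) ≤ (k:ℝ) := by exact_mod_cast hk
    have c1 : (ξ.card : ℝ) ≤ (k:ℝ) * ((J:ℝ) + 1) * (2:ℝ) ^ (d * t) + k := by
      have := hξcard
      have h' : ((ξ.card : ℕ) : ℝ) ≤ ((k * (J + 1) * 2 ^ (d * t) + k : ℕ) : ℝ) := by
        exact_mod_cast this
      push_cast at h'
      linarith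
    have A : (k:ℝ) * ((J:ℝ) + 1) * (2:ℝ) ^ (d * t) ≤ (k:ℝ) * ((J:ℝ) + 1) * (8 / ε) ^ d := by
      apply mul_le_mul_of_nonneg_left hpow (by positivity)
    have B : (k:ℝ) ≤ (k:ℝ) * (8 / ε) ^ d := le_mul_of_one_le_right (by positivity) hpow1
    have hlognn : 0 ≤ Real.log n := Real.log_nonneg (by exact_mod_cast hn.trans' (by norm_num))
    have hJle : (J:ℝ) ≤ 7 * Real.log n + 7 := by
      rw [hJdef]
      push_cast
      have := Nat.ceil_lt_add_one hlognn
      linarith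
    have hJ2 : (J:ℝ) + 2 ≤ 100 * Real.log n := by nlinarith [hlogn, hlog2, hlognn]
    have D : (k:ℝ) * ((J:ℝ) + 2) * (8 / ε) ^ d ≤ (k:ℝ) * (100 * Real.log n) * (8 / ε) ^ d := by
      apply mul_le_mul_of_nonneg_right _ (by positivity)
      exact mul_le_mul_of_nonneg_left hJ2 (by positivity)
    calc (ξ.card : ℝ) ≤ (k:ℝ) * ((J:ℝ) + 1) * (2:ℝ) ^ (d * t) + k := c1
      _ ≤ (k:ℝ) * ((J:ℝ) + 1) * (8 / ε) ^ d + (k:ℝ) * (8 / ε) ^ d := by linarith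
      _ = (k:ℝ) * ((J:ℝ) + 2) * (8 / ε) ^ d := by ring
      _ ≤ (k:ℝ) * (100 * Real.log n) * (8 / ε) ^ d := D
      _ = 100 * (k:ℝ) * Real.log n * (8 / ε) ^ d := by ring
  · -- cost bound
    have hb : ∀ i : Fin n, ∃ z ∈ ξ, dist (X i) z ≤ 2 * (θ ^ (idx i) * ρ0) / 2 ^ t := by
      intro i
      obtain ⟨z, hz, hdist⟩ := hnetprop (cc i, idx i) i rfl rfl
      refine ⟨z, ?_, hdist⟩
      exact Finset.mem_union_left _ (Finset.mem_biUnion.mpr ⟨(cc i, idx i),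
        Finset.mem_product.mpr ⟨hcc1 i, Finset.mem_range.mpr (by have := (hidx i).1; omega)⟩, hz⟩)
    have hcost : medCost ξ X ≤ ∑ i, (2 * (θ ^ (idx i) * ρ0) / 2 ^ t) :=
      medCost_le_sum ξ X _ hb
    have hterm : ∀ i : Fin n, 2 * (θ ^ (idx i) * ρ0) / 2 ^ t
        ≤ (ε / 2) * ρ0 + (7 / 10) * ε * r i := by
      intro i
      have hA : (0:ℝ) ≤ θ ^ (idx i) * ρ0 := by positivity
      have h4 : 4 ≤ 2 ^ t * ε := (div_le_iff₀ hε).mp h2t_ge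
      have hinv : (1:ℝ) / 2 ^ t ≤ ε / 4 := by
        rw [div_le_div_iff₀ h2tpos (by norm_num : (0:ℝ) < 4)]
        linarith
      have h1 : 2 * (θ ^ (idx i) * ρ0) / 2 ^ t ≤ 2 * (θ ^ (idx i) * ρ0) * (ε / 4) := by
        rw [div_eq_mul_one_div]
        exact mul_le_mul_of_nonneg_left hinv (by positivity)
      have h3 := (hidx i).2.2
      calc 2 * (θ ^ (idx i) * ρ0) / 2 ^ t ≤ 2 * (θ ^ (idx i) * ρ0) * (ε / 4) := h1
        _ = (ε / 2) * (θ ^ (idx i) * ρ0) := by ring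
        _ ≤ (ε / 2) * (ρ0 + θ * r i) := mul_le_mul_of_nonneg_left h3 (by positivity)
        _ = (ε / 2) * ρ0 + (7 / 10) * ε * r i := by rw [hθdef]; ring
    have hsum2 : ∑ i, ((ε / 2) * ρ0 + (7 / 10) * ε * r i)
        = (n:ℝ) * ((ε / 2) * ρ0) + (7 / 10) * ε * Φ := by
      rw [Finset.sum_add_distrib, Finset.sum_const, Finset.card_univ, ← Finset.mul_sum,
        ← hrsum]
      simp [nsmul_eq_mul]
    have hnρ : (n:ℝ) * ρ0 ≤ Φ / 2 := by
      have he : (n:ℝ) * ρ0 = Φ / n := by rw [hρ0def]; field_simp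
      rw [he, div_le_div_iff₀ hεn (by norm_num : (0:ℝ) < 2)]
      have hn2 : (2:ℝ) ≤ n := by exact_mod_cast hn
      nlinarith
    have e1 : ε * Φ < ε * ((25 / 24) * Δ) := mul_lt_mul_of_pos_left hΦlt hε
    have e2 : 0 < ε * Δ := mul_pos hε hΔ
    have hfinal : (n:ℝ) * ((ε / 2) * ρ0) + (7 / 10) * ε * Φ ≤ ε * Δ := by
      have h5 : (n:ℝ) * ((ε / 2) * ρ0) = (ε / 2) * ((n:ℝ) * ρ0) := by ring
      have h6 : (ε / 2) * ((n:ℝ) * ρ0) ≤ (ε / 2) * (Φ / 2) :=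
        mul_le_mul_of_nonneg_left hnρ (by positivity)
      rw [h5]
      nlinarith
    calc medCost ξ X ≤ ∑ i, (2 * (θ ^ (idx i) * ρ0) / 2 ^ t) := hcost
      _ ≤ ∑ i, ((ε / 2) * ρ0 + (7 / 10) * ε * r i) :=
          Finset.sum_le_sum fun i _ => hterm i
      _ = (n:ℝ) * ((ε / 2) * ρ0) + (7 / 10) * ε * Φ := hsum2
      _ ≤ ε * Δ := hfinal


/-- upper bound for metric k-median. There is a universal
constant `c > 0` such that for every metric space `𝒳` of doubling dimension at
most `d`, every `0 < ε ≤ 1`, `k ≥ 1` and every family `X` of `n ≥ 2` points in `𝒳`,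
there is a finite set `ξ ⊆ 𝒳` with `|ξ| ≤ c · k · log n · (8/ε)^d` and
`Φ(ξ, X) ≤ ε · Δ_k(X)`. -/
theorem metric_kmedian_upper_bound :
    ∃ c : ℝ, 0 < c ∧
      ∀ (𝒳 : Type) [MetricSpace 𝒳], ∀ d : ℕ, DoublingDimLE 𝒳 d →
      ∀ ε : ℝ, 0 < ε → ε ≤ 1 →
      ∀ k : ℕ, 1 ≤ k →
      ∀ n : ℕ, 2 ≤ n →
      ∀ X : Fin n → 𝒳,
        ∃ ξ : Finset 𝒳, ξ.Nonempty ∧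
          (ξ.card : ℝ) ≤ c * k * Real.log n * (8 / ε) ^ d ∧
          medCost ξ X ≤ ε * medOpt k X := by
  refine ⟨100, by norm_num, ?_⟩
  intro 𝒳 _ d hd ε hε hε1 k hk n hn X
  have hlogn : Real.log 2 ≤ Real.log n := Real.log_le_log (by norm_num) (by exact_mod_cast hn)
  have hlog2 : (0.6931471803 : ℝ) < Real.log 2 := Real.log_two_gt_d9
  have h8ε : (8:ℝ) ≤ 8 / ε := by
    rw [le_div_iff₀ hε]; nlinarith
  have hpow1 : (1:ℝ) ≤ (8 / ε) ^ d := one_le_pow₀ (by linarith)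
  have hk1 : (1:ℝ) ≤ (k:ℝ) := by exact_mod_cast hk
  rcases le_or_gt (medOpt k X) 0 with h | h
  · obtain ⟨ξ, hne, hcard, hcost⟩ := degenerate_case hk hn X h
    refine ⟨ξ, hne, ?_, ?_⟩
    · have h1 : (1:ℝ) ≤ 100 * Real.log n := by nlinarith
      have h2 : (1:ℝ) ≤ 100 * Real.log n * (8 / ε) ^ d := by nlinarith
      calc (ξ.card : ℝ) ≤ (k:ℝ) := by exact_mod_cast hcard
        _ = (k:ℝ) * 1 := by ring
        _ ≤ (k:ℝ) * (100 * Real.log n * (8 / ε) ^ d) :=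
            mul_le_mul_of_nonneg_left h2 (by positivity)
        _ = 100 * (k:ℝ) * Real.log n * (8 / ε) ^ d := by ring
    · have h0 : medOpt k X = 0 := le_antisymm h (medOpt_nonneg k X)
      rw [h0]
      simpa using hcost
  · exact main_case hd hε hε1 hk hn X h
end
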